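/- Let d ≥ 1, let a, b, a', c ∈ ℤ^d with c ≠ 0, let t be a real number with t ≥ 0 and a = a' + tc, and let Λ, Ω be real numbers with Λ ≥ 1 and Ω ≥ (Λ+1)(|a−b| + 1). If |a| ≥ Ω(|a'| + |c|)|c|, then |b| ≥ Λ(|a' + b − a| + |c|)|c| (that is, b = b' + tc with b' = a' + b − a satisfies |b| ≥ Λ(|b'| + |c|)|c|). -/

import Mathlib

noncomputable def latt {d : ℕ} (a : Fin d → ℤ) : EuclideanSpace ℝ (Fin d) :=
  WithLp.toLp 2 (fun i => (a i : ℝ))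

lemma latt_sub {d : ℕ} (a b : Fin d → ℤ) : latt (a - b) = latt a - latt b := by
  ext i; simp [latt]

lemma latt_one_le {d : ℕ} (c : Fin d → ℤ) (hc : c ≠ 0) : 1 ≤ ‖latt c‖ := by
  obtain ⟨i, hi⟩ := Function.ne_iff.mp hc
  have h1 : (1:ℝ) ≤ |(c i : ℝ)| := by
    have : 1 ≤ |c i| := Int.one_le_abs hi
    exact_mod_cast this
  have h2 : |(c i : ℝ)| ≤ ‖latt c‖ := by
    have := EuclideanSpace.norm_eq (latt c)
    rw [this]
    have : |(c i : ℝ)| = Real.sqrt (‖(latt c) i‖ ^ 2) := by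
      simp [latt, Real.sqrt_sq_eq_abs]
    rw [this]
    apply Real.sqrt_le_sqrt
    exact Finset.single_le_sum (f := fun j => ‖latt c j‖ ^ 2) (fun j _ => by positivity) (Finset.mem_univ i)
  linarith

/-- Lemma 2.1(iv): let `a = a' + tc` with `t ≥ 0`, `Λ ≥ 1` and
`Ω ≥ (Λ+1)(|a−b| + 1)`.  If `|a| ≥ Ω(|a'| + |c|)|c|`, then
`|b| ≥ Λ(|b'| + |c|)|c|` where `b' = a' + b − a`. -/
theorem stmt_3 {d : ℕ} (hd : 1 ≤ d) (a b a' c : Fin d → ℤ) (hc : c ≠ 0)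
    (t : ℝ) (ht : 0 ≤ t) (hat : latt a = latt a' + t • latt c)
    (Λ Ω : ℝ) (hΛ : 1 ≤ Λ) (hΩ : (Λ + 1) * (‖latt (a - b)‖ + 1) ≤ Ω)
    (h : Ω * (‖latt a'‖ + ‖latt c‖) * ‖latt c‖ ≤ ‖latt a‖) :
    Λ * (‖latt (a' + b - a)‖ + ‖latt c‖) * ‖latt c‖ ≤ ‖latt b‖ := by
  set D := ‖latt (a - b)‖ with hD
  have hc1 : 1 ≤ ‖latt c‖ := latt_one_le c hc
  have ha'0 : 0 ≤ ‖latt a'‖ := norm_nonneg _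
  have hD0 : 0 ≤ D := norm_nonneg _
  have hb' : ‖latt (a' + b - a)‖ ≤ ‖latt a'‖ + D := by
    have : latt (a' + b - a) = latt a' - latt (a - b) := by
      ext i; simp [latt]; push_cast; ring
    rw [this]
    exact norm_sub_le _ _
  have hb : ‖latt a‖ - D ≤ ‖latt b‖ := by
    have : latt a - latt b = latt (a - b) := (latt_sub a b).symm
    have := norm_sub_norm_le (latt a) (latt b)
    rw [‹latt a - latt b = _›] at this
    linarith
  have hΛ0 : (0:ℝ) ≤ Λ := by linarith
  have hC0 : (0:ℝ) ≤ ‖latt c‖ := norm_nonneg _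
  have hXC : ‖latt c‖ ≤ (‖latt a'‖ + ‖latt c‖) * ‖latt c‖ := by nlinarith
  have hX1 : (1:ℝ) ≤ (‖latt a'‖ + ‖latt c‖) * ‖latt c‖ := by nlinarith
  have step1 : Λ * (‖latt (a' + b - a)‖ + ‖latt c‖) * ‖latt c‖ ≤
      Λ * ((‖latt a'‖ + ‖latt c‖) * ‖latt c‖) + Λ * D * ‖latt c‖ := by
    nlinarith [mul_le_mul_of_nonneg_right hb' (mul_nonneg hΛ0 hC0)]
  have h2 : (Λ + 1) * (D + 1) * ((‖latt a'‖ + ‖latt c‖) * ‖latt c‖) ≤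
      Ω * ((‖latt a'‖ + ‖latt c‖) * ‖latt c‖) :=
    mul_le_mul_of_nonneg_right hΩ (by linarith)
  have step2 : Λ * ((‖latt a'‖ + ‖latt c‖) * ‖latt c‖) + Λ * D * ‖latt c‖ + D ≤
      Ω * ((‖latt a'‖ + ‖latt c‖) * ‖latt c‖) := by
    nlinarith [mul_le_mul_of_nonneg_left hXC (mul_nonneg hΛ0 hD0),
      mul_le_mul_of_nonneg_left hX1 hD0]
  have hfin : Ω * ((‖latt a'‖ + ‖latt c‖) * ‖latt c‖) ≤ ‖latt b‖ + D := by
    nlinarith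
  linarith
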